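/- Let K be a field of characteristic zero, f ∈ lie_m, g ∈ lie_n, σ a permutation of {1,…,m}, τ a permutation of {1,…,n}, and 1 ≤ i ≤ m. Then f^σ ∘_{σ⁻¹(i)} g^τ = (f ∘_i g)^{σ∘_iτ} in lie_{m+n−1}. -/

import Mathlib

open FreeLieAlgebra

variable (K : Type) [Field K] [CharZero K]

/-- The free Lie algebra over `K` on `N` generators `x_1, …, x_N`
(indexed here 0-based by `Fin N`). -/
abbrev lieF (N : ℕ) : Type := FreeLieAlgebra K (Fin N)

/-- The `(k+1)`-st generator of `lieF K N` (0-based index `k`), junk value `0` out of range. -/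
noncomputable def xg (N k : ℕ) : lieF K N :=
  if h : k < N then FreeLieAlgebra.of K (⟨k, h⟩ : Fin N) else 0

/-- The Lie algebra homomorphism `Φ_i : lie_m → lie_{m+n-1}` sending (0-based) `x_j ↦ x_j`
for `j < i`, `x_i ↦ x_i + x_{i+1} + ⋯ + x_{i+n-1}`, and `x_j ↦ x_{j+n-1}` for `j > i`. -/
noncomputable def PhiL (m n i : ℕ) : lieF K m →ₗ⁅K⁆ lieF K (m + n - 1) :=
  FreeLieAlgebra.lift K fun j : Fin m =>
    if (j : ℕ) < i then xg K (m + n - 1) (j : ℕ)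
    else if (j : ℕ) = i then ∑ t : Fin n, xg K (m + n - 1) (i + (t : ℕ))
    else xg K (m + n - 1) ((j : ℕ) + n - 1)

/-- The Lie algebra homomorphism `Ψ_i : lie_n → lie_{m+n-1}` sending (0-based)
`x_j ↦ x_{i+j}`. -/
noncomputable def PsiL (m n i : ℕ) : lieF K n →ₗ⁅K⁆ lieF K (m + n - 1) :=
  FreeLieAlgebra.lift K fun j : Fin n => xg K (m + n - 1) (i + (j : ℕ))

/-- The partial composition `f ∘_i g := Φ_i(f) + Ψ_i(g)` of free Lie algebra elements
(the pivot `i` is 0-based). -/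
noncomputable def compL {m n : ℕ} (f : lieF K m) (i : ℕ) (g : lieF K n) :
    lieF K (m + n - 1) :=
  PhiL K m n i f + PsiL K m n i g

/-- The canonical identification `lie_N ≅ lie_{N'}` for `N = N'`. -/
noncomputable def recastL {N N' : ℕ} (hNN : N = N') : lieF K N →ₗ⁅K⁆ lieF K N' :=
  FreeLieAlgebra.lift K fun j => FreeLieAlgebra.of K (Fin.cast hNN j)

/-- The Lie algebra automorphism `P_σ` of `lie_N` with `P_σ(x_j) = x_{σ⁻¹(j)}`;
`f^σ := P_σ(f)`. -/
noncomputable def permL {N : ℕ} (σ : Equiv.Perm (Fin N)) : lieF K N →ₗ⁅K⁆ lieF K N :=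
  FreeLieAlgebra.lift K fun j => FreeLieAlgebra.of K (σ⁻¹ j)

/-- The value of a permutation of `Fin N` at a natural number (junk value `k` out of
range). -/
def permVal {N : ℕ} (σ : Equiv.Perm (Fin N)) (k : ℕ) : ℕ :=
  if h : k < N then ((σ ⟨k, h⟩ : Fin N) : ℕ) else k


lemma xg_eq {N k : ℕ} (h : k < N) : xg K N k = FreeLieAlgebra.of K (⟨k, h⟩ : Fin N) :=
  dif_pos h

lemma permVal_eq {N : ℕ} (σ : Equiv.Perm (Fin N)) {k : ℕ} (h : k < N) :
    permVal σ k = ((σ ⟨k, h⟩ : Fin N) : ℕ) := dif_pos h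

lemma permL_of {N : ℕ} (σ : Equiv.Perm (Fin N)) (j : Fin N) :
    permL K σ (FreeLieAlgebra.of K j) = FreeLieAlgebra.of K (σ⁻¹ j) :=
  FreeLieAlgebra.lift_of_apply _ j

lemma permL_xg {N : ℕ} (σ : Equiv.Perm (Fin N)) {k : ℕ} (h : k < N) :
    permL K σ (xg K N k) = FreeLieAlgebra.of K (σ⁻¹ ⟨k, h⟩) := by
  rw [xg_eq K h, permL_of K]

lemma PhiL_of (m n i : ℕ) (j : Fin m) :
    PhiL K m n i (FreeLieAlgebra.of K j) =
      (if (j : ℕ) < i then xg K (m + n - 1) (j : ℕ)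
       else if (j : ℕ) = i then ∑ t : Fin n, xg K (m + n - 1) (i + (t : ℕ))
       else xg K (m + n - 1) ((j : ℕ) + n - 1)) :=
  FreeLieAlgebra.lift_of_apply _ j

lemma PsiL_of (m n i : ℕ) (j : Fin n) :
    PsiL K m n i (FreeLieAlgebra.of K j) = xg K (m + n - 1) (i + (j : ℕ)) :=
  FreeLieAlgebra.lift_of_apply _ j

/-- Equivariance of the partial composition: `f^σ ∘_{σ⁻¹(i)} g^τ = (f ∘_i g)^{σ∘_iτ}`.
All indices are 0-based; the hypothesis `hρ` states that `ρ` is the inserted permutation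
`σ∘_iτ` (where the cases of the paper's 1-based definition are translated to 0-based
indices, with `p := σ⁻¹(i)`: for `k < p`, `ρ(k) = σ(k)` if `σ(k) < i` and `σ(k)+n-1`
otherwise; for `p ≤ k < p+n`, `ρ(k) = τ(k-p)+i`; and for `k ≥ p+n`, `ρ(k) = σ(k+1-n)`
if `σ(k+1-n) < i` and `σ(k+1-n)+n-1` otherwise). -/
theorem lie_comp_equivariant (m n : ℕ) (hn : 1 ≤ n)
    (f : lieF K m) (g : lieF K n)
    (σ : Equiv.Perm (Fin m)) (τ : Equiv.Perm (Fin n)) (i : ℕ) (hi : i < m)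
    (ρ : Equiv.Perm (Fin (m + n - 1)))
    (hρ : ∀ k : ℕ, k < m + n - 1 →
      permVal ρ k =
        if k < permVal σ.symm i then
          if permVal σ k < i then permVal σ k else permVal σ k + n - 1
        else if k < permVal σ.symm i + n then
          permVal τ (k - permVal σ.symm i) + i
        else if permVal σ (k + 1 - n) < i then permVal σ (k + 1 - n)
        else permVal σ (k + 1 - n) + n - 1) :
    compL K (permL K σ f) (permVal σ.symm i) (permL K τ g) =
      permL K ρ (compL K f i g) := by
  have hm : 1 ≤ m := by omega
  set p : Fin m := σ⁻¹ ⟨i, hi⟩ with hpdef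
  have hpm : (p : ℕ) < m := p.isLt
  have hpv : permVal σ.symm i = (p : ℕ) := permVal_eq σ.symm hi
  have hσp : σ p = ⟨i, hi⟩ := by simp [hpdef]
  -- values of ρ
  have factA : ∀ (k : ℕ) (hk : k < m), k < (p : ℕ) →
      (ρ ⟨k, by omega⟩ : ℕ) =
        if ((σ ⟨k, hk⟩ : Fin m) : ℕ) < i then ((σ ⟨k, hk⟩ : Fin m) : ℕ)
        else ((σ ⟨k, hk⟩ : Fin m) : ℕ) + n - 1 := by
    intro k hk hkp
    have hkM : k < m + n - 1 := by omega
    have h := hρ k hkM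
    rw [permVal_eq ρ hkM, hpv, permVal_eq σ hk, if_pos hkp] at h
    exact h
  have factB : ∀ (s : ℕ) (hs : s < n),
      (ρ ⟨(p : ℕ) + s, by omega⟩ : ℕ) = ((τ ⟨s, hs⟩ : Fin n) : ℕ) + i := by
    intro s hs
    have hkM : (p : ℕ) + s < m + n - 1 := by omega
    have h := hρ _ hkM
    rw [permVal_eq ρ hkM, hpv, if_neg (by omega), if_pos (by omega),
      show (p : ℕ) + s - (p : ℕ) = s by omega, permVal_eq τ hs] at h
    exact h
  have factC : ∀ (k : ℕ) (hk : k < m), (p : ℕ) < k →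
      (ρ ⟨k + n - 1, by omega⟩ : ℕ) =
        if ((σ ⟨k, hk⟩ : Fin m) : ℕ) < i then ((σ ⟨k, hk⟩ : Fin m) : ℕ)
        else ((σ ⟨k, hk⟩ : Fin m) : ℕ) + n - 1 := by
    intro k hk hkp
    have hkM : k + n - 1 < m + n - 1 := by omega
    have h := hρ _ hkM
    rw [permVal_eq ρ hkM, hpv, if_neg (by omega), if_neg (by omega),
      show k + n - 1 + 1 - n = k by omega, permVal_eq σ hk] at h
    exact h
  have key1 : (PhiL K m n (p : ℕ)).comp (permL K σ) = (permL K ρ).comp (PhiL K m n i) := by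
    apply FreeLieAlgebra.hom_ext
    intro j
    rw [LieHom.comp_apply, LieHom.comp_apply, permL_of K, PhiL_of K, PhiL_of K]
    set j' : Fin m := σ⁻¹ j with hj'
    have hσj' : ((σ ⟨(j' : ℕ), j'.isLt⟩ : Fin m) : ℕ) = (j : ℕ) := by
      simp [hj']
    rcases lt_trichotomy ((j' : ℕ)) ((p : ℕ)) with hlt | heq | hgt
    · have hji : (j : ℕ) ≠ i := by
        intro h
        have hj : j = (⟨i, hi⟩ : Fin m) := Fin.ext h
        have : j' = p := by rw [hj', hj]
        rw [this] at hlt; exact lt_irrefl _ hlt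
      rw [if_pos hlt]
      have hjm' : (j' : ℕ) < m + n - 1 := by omega
      rcases Nat.lt_or_ge ((j : ℕ)) i with hjilt | hjige
      · rw [if_pos hjilt]
        have hjM : (j : ℕ) < m + n - 1 := by omega
        rw [permL_xg K ρ hjM, xg_eq K hjm']
        have hr : ρ ⟨(j' : ℕ), hjm'⟩ = ⟨(j : ℕ), hjM⟩ := by
          apply Fin.ext
          rw [factA (j' : ℕ) j'.isLt hlt, hσj', if_pos hjilt]
        rw [← hr, Equiv.Perm.coe_inv, Equiv.symm_apply_apply]
      · have hjigt : i < (j : ℕ) := by omega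
        rw [if_neg (by omega), if_neg hji]
        have hjM : (j : ℕ) + n - 1 < m + n - 1 := by omega
        rw [permL_xg K ρ hjM, xg_eq K hjm']
        have hr : ρ ⟨(j' : ℕ), hjm'⟩ = ⟨(j : ℕ) + n - 1, hjM⟩ := by
          apply Fin.ext
          rw [factA (j' : ℕ) j'.isLt hlt, hσj', if_neg (by omega)]
        rw [← hr, Equiv.Perm.coe_inv, Equiv.symm_apply_apply]
    · have hji : (j : ℕ) = i := by
        have hjp : j' = p := Fin.ext heq
        have : j = σ p := by rw [← hjp, hj', Equiv.Perm.coe_inv, Equiv.apply_symm_apply]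
        rw [this, hσp]
      rw [if_neg (show ¬((j' : ℕ) < (p : ℕ)) by omega), if_pos heq,
        if_neg (show ¬((j : ℕ) < i) by omega), if_pos hji,
        show (permL K ρ) (∑ t : Fin n, xg K (m + n - 1) (i + (t : ℕ)))
            = ∑ t : Fin n, permL K ρ (xg K (m + n - 1) (i + (t : ℕ))) from
          map_sum (permL K ρ).toLinearMap _ _]
      have hterm : ∀ t : Fin n,
          permL K ρ (xg K (m + n - 1) (i + (t : ℕ))) =
            xg K (m + n - 1) ((p : ℕ) + ((τ⁻¹ t : Fin n) : ℕ)) := by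
        intro t
        have htM : i + (t : ℕ) < m + n - 1 := by omega
        have hpt : (p : ℕ) + ((τ⁻¹ t : Fin n) : ℕ) < m + n - 1 := by
          have := (τ⁻¹ t).isLt; omega
        rw [permL_xg K ρ htM, xg_eq K hpt]
        have hr : ρ ⟨(p : ℕ) + ((τ⁻¹ t : Fin n) : ℕ), hpt⟩ = ⟨i + (t : ℕ), htM⟩ := by
          apply Fin.ext
          rw [factB _ (τ⁻¹ t).isLt]
          simp [Nat.add_comm]
        rw [← hr, Equiv.Perm.coe_inv, Equiv.symm_apply_apply]
      calc (∑ t : Fin n, xg K (m + n - 1) ((p : ℕ) + (t : ℕ)))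
          = ∑ t : Fin n, xg K (m + n - 1) ((p : ℕ) + ((τ⁻¹ t : Fin n) : ℕ)) :=
            (Equiv.sum_comp (τ⁻¹ : Equiv.Perm (Fin n))
              (fun s => xg K (m + n - 1) ((p : ℕ) + (s : ℕ)))).symm
        _ = ∑ t : Fin n, permL K ρ (xg K (m + n - 1) (i + (t : ℕ))) := by
            exact Finset.sum_congr rfl fun t _ => (hterm t).symm
    · have hji : (j : ℕ) ≠ i := by
        intro h
        have hj : j = (⟨i, hi⟩ : Fin m) := Fin.ext h
        have : j' = p := by rw [hj', hj]
        rw [this] at hgt; exact lt_irrefl _ hgt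
      rw [if_neg (by omega), if_neg (by omega)]
      have hjm' : (j' : ℕ) + n - 1 < m + n - 1 := by omega
      rcases Nat.lt_or_ge ((j : ℕ)) i with hjilt | hjige
      · rw [if_pos hjilt]
        have hjM : (j : ℕ) < m + n - 1 := by omega
        rw [permL_xg K ρ hjM, xg_eq K hjm']
        have hr : ρ ⟨(j' : ℕ) + n - 1, hjm'⟩ = ⟨(j : ℕ), hjM⟩ := by
          apply Fin.ext
          rw [factC (j' : ℕ) j'.isLt hgt, hσj', if_pos hjilt]
        rw [← hr, Equiv.Perm.coe_inv, Equiv.symm_apply_apply]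
      · have hjigt : i < (j : ℕ) := by omega
        rw [if_neg (by omega), if_neg hji]
        have hjM : (j : ℕ) + n - 1 < m + n - 1 := by omega
        rw [permL_xg K ρ hjM, xg_eq K hjm']
        have hr : ρ ⟨(j' : ℕ) + n - 1, hjm'⟩ = ⟨(j : ℕ) + n - 1, hjM⟩ := by
          apply Fin.ext
          rw [factC (j' : ℕ) j'.isLt hgt, hσj', if_neg (by omega)]
        rw [← hr, Equiv.Perm.coe_inv, Equiv.symm_apply_apply]
  have key2 : (PsiL K m n (p : ℕ)).comp (permL K τ) = (permL K ρ).comp (PsiL K m n i) := by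
    apply FreeLieAlgebra.hom_ext
    intro j
    rw [LieHom.comp_apply, LieHom.comp_apply, permL_of K, PsiL_of K, PsiL_of K]
    have htM : i + (j : ℕ) < m + n - 1 := by omega
    have hpt : (p : ℕ) + ((τ⁻¹ j : Fin n) : ℕ) < m + n - 1 := by
      have := (τ⁻¹ j).isLt; omega
    rw [permL_xg K ρ htM, xg_eq K hpt]
    have hr : ρ ⟨(p : ℕ) + ((τ⁻¹ j : Fin n) : ℕ), hpt⟩ = ⟨i + (j : ℕ), htM⟩ := by
      apply Fin.ext
      rw [factB _ (τ⁻¹ j).isLt]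
      simp [Nat.add_comm]
    rw [← hr, Equiv.Perm.coe_inv ρ, Equiv.symm_apply_apply]
  rw [hpv]
  simp only [compL, map_add]
  rw [← LieHom.comp_apply (PhiL K m n (p : ℕ)) (permL K σ) f, key1,
    ← LieHom.comp_apply (PsiL K m n (p : ℕ)) (permL K τ) g, key2,
    LieHom.comp_apply, LieHom.comp_apply]
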